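/- Let (S_n) be the house-of-cards chain with decreasing parameters (γ_n), γ_n → 0. If Σ_{m≥1} ∏_{k=0}^{m}(1-γ_k) = +∞, then P(S_n = 0) → 0 as n → ∞. -/

import Mathlib

open Finset

/-- `hoc γ n j` is the probability `P(S_n = j)` for the "house of cards" Markov chain on `ℕ`
starting at `0`, with transition probabilities `p_{i,i+1} = 1 - γ i` and `p_{i,0} = γ i`. -/
noncomputable def hoc (γ : ℕ → ℝ) : ℕ → ℕ → ℝ
  | 0, j => if j = 0 then 1 else 0
  | n + 1, 0 => ∑ i ∈ Finset.range (n + 1), γ i * hoc γ n i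
  | n + 1, j + 1 => (1 - γ j) * hoc γ n j

/-- `ptau γ n` is `P(τ = n)`, the distribution of the first return time to `0`:
`P(τ = n) = γ_{n-1} ∏_{m=0}^{n-2} (1 - γ_m)` for `n ≥ 1`, and `0` for `n = 0`. -/
noncomputable def ptau (γ : ℕ → ℝ) (n : ℕ) : ℝ :=
  if n = 0 then 0 else γ (n - 1) * ∏ m ∈ Finset.range (n - 1), (1 - γ m)

/-- `tailS γ n k = P(S_n ≥ k)` (the chain satisfies `S_n ≤ n`). -/
noncomputable def tailS (γ : ℕ → ℝ) (n k : ℕ) : ℝ :=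
  ∑ j ∈ Finset.Icc k n, hoc γ n j

section aux
variable {γ : ℕ → ℝ}

lemma hoc_nonneg (hγ0 : ∀ k, 0 ≤ γ k) (hγ1 : ∀ k, γ k < 1) :
    ∀ n j, 0 ≤ hoc γ n j := by
  intro n
  induction n with
  | zero => intro j; simp only [hoc]; split <;> norm_num
  | succ n ih =>
    intro j
    match j with
    | 0 =>
      simp only [hoc]
      exact Finset.sum_nonneg fun i _ => mul_nonneg (hγ0 i) (ih i)
    | j + 1 =>
      simp only [hoc]
      exact mul_nonneg (by linarith [hγ1 j]) (ih j)

lemma sum_hoc : ∀ n, ∑ j ∈ range (n + 1), hoc γ n j = 1 := by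
  intro n
  induction n with
  | zero => simp [hoc]
  | succ n ih =>
    rw [Finset.sum_range_succ']
    simp only [hoc]
    rw [← Finset.sum_add_distrib]
    exact Eq.trans (Finset.sum_congr rfl fun j _ => by ring) ih

lemma hoc_eq (hγ0 : ∀ k, 0 ≤ γ k) :
    ∀ j n, j ≤ n → hoc γ n j = (∏ k ∈ range j, (1 - γ k)) * hoc γ (n - j) 0 := by
  intro j
  induction j with
  | zero => intro n _; simp
  | succ j ih =>
    intro n hn
    obtain ⟨m, rfl⟩ : ∃ m, n = m + 1 := ⟨n - 1, by omega⟩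
    simp only [hoc]
    rw [ih m (by omega), prod_range_succ]
    have : m + 1 - (j + 1) = m - j := by omega
    rw [this]; ring

lemma tailS_zero (n : ℕ) : tailS γ n 0 = 1 := by
  have : Icc 0 n = range (n + 1) := by ext x; simp [Nat.lt_succ_iff]
  rw [tailS, this, sum_hoc]

lemma tailS_nonneg (hγ0 : ∀ k, 0 ≤ γ k) (hγ1 : ∀ k, γ k < 1) (n k : ℕ) :
    0 ≤ tailS γ n k :=
  Finset.sum_nonneg fun j _ => hoc_nonneg hγ0 hγ1 n j

lemma tailS_succ (n k : ℕ) :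
    tailS γ (n + 1) (k + 1) = ∑ j ∈ Icc k n, (1 - γ j) * hoc γ n j := by
  rw [tailS]
  have : Icc (k + 1) (n + 1) = Finset.map (addRightEmbedding 1) (Icc k n) := by
    rw [Finset.map_add_right_Icc]
  rw [this, Finset.sum_map]
  exact Finset.sum_congr rfl fun j _ => by simp [addRightEmbedding, hoc]

lemma tele (k n : ℕ) (h : k ≤ n) :
    ∑ i ∈ Ico k n, (γ i - γ (i + 1)) = γ k - γ n := by
  rw [Finset.sum_Ico_eq_sub _ h, Finset.sum_range_sub', Finset.sum_range_sub']
  ring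

lemma abel (x : ℕ → ℝ) (k : ℕ) : ∀ n,
    ∑ j ∈ Icc k n, (1 - γ j) * x j
      = (1 - γ k) * ∑ j ∈ Icc k n, x j
        + ∑ i ∈ Ico k n, (γ i - γ (i + 1)) * ∑ j ∈ Icc (i + 1) n, x j := by
  intro n
  induction n with
  | zero =>
    rcases Nat.eq_zero_or_pos k with rfl | hk
    · simp
    · rw [Finset.Icc_eq_empty (by omega), Finset.Ico_eq_empty (by omega)]; simp
  | succ n ih =>
    rcases Nat.lt_or_ge (n + 1) k with hk | hk
    · rw [Finset.Icc_eq_empty (by omega : ¬ k ≤ n + 1),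
        Finset.Ico_eq_empty (by omega : ¬ k < n + 1)]; simp
    rcases Nat.lt_or_ge n k with hk2 | hk2
    · -- k = n + 1
      have hk3 : k = n + 1 := by omega
      subst hk3
      simp
    -- k ≤ n
    rw [Finset.sum_Icc_succ_top (by omega), Finset.sum_Icc_succ_top (by omega),
      Finset.sum_Ico_succ_top (by omega), ih]
    have h1 : ∑ i ∈ Ico k n, (γ i - γ (i + 1)) * ∑ j ∈ Icc (i + 1) (n + 1), x j
        = ∑ i ∈ Ico k n, ((γ i - γ (i + 1)) * ∑ j ∈ Icc (i + 1) n, x j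
            + (γ i - γ (i + 1)) * x (n + 1)) := by
      refine Finset.sum_congr rfl fun i hi => ?_
      rw [Finset.sum_Icc_succ_top (by simp at hi; omega)]
      ring
    rw [h1, Finset.sum_add_distrib, ← Finset.sum_mul, tele k n hk2]
    have h2 : Icc (n + 1) (n + 1) = {n + 1} := by simp
    rw [h2, Finset.sum_singleton]
    ring

lemma tailS_mono (hdec : Antitone γ) (hγ0 : ∀ k, 0 ≤ γ k) (hγ1 : ∀ k, γ k < 1) :
    ∀ n k, tailS γ n k ≤ tailS γ (n + 1) k := by
  intro n
  induction n with
  | zero =>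
    intro k
    match k with
    | 0 => rw [tailS_zero, tailS_zero]
    | k + 1 =>
      have : tailS γ 0 (k + 1) = 0 := by
        rw [tailS, Finset.Icc_eq_empty (by omega), Finset.sum_empty]
      rw [this]
      exact tailS_nonneg hγ0 hγ1 _ _
  | succ n ih =>
    intro k
    match k with
    | 0 => rw [tailS_zero, tailS_zero]
    | j + 1 =>
      rw [tailS_succ, tailS_succ, abel, abel]
      have e1 : ∀ m i, (∑ l ∈ Icc (i + 1) m, hoc γ m l) = tailS γ m (i + 1) := fun m i => rfl
      have e2 : ∀ m i, (∑ l ∈ Icc i m, hoc γ m l) = tailS γ m i := fun m i => rfl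
      simp only [e1, e2]
      have hc : ∀ i : ℕ, (0:ℝ) ≤ γ i - γ (i + 1) := fun i => by
        have := hdec (Nat.le_succ i); linarith
      have hA : (1 - γ j) * tailS γ n j ≤ (1 - γ j) * tailS γ (n + 1) j :=
        mul_le_mul_of_nonneg_left (ih j) (by linarith [hγ1 j])
      have hB : ∑ i ∈ Ico j n, (γ i - γ (i + 1)) * tailS γ n (i + 1)
          ≤ ∑ i ∈ Ico j n, (γ i - γ (i + 1)) * tailS γ (n + 1) (i + 1) :=
        Finset.sum_le_sum fun i _ => mul_le_mul_of_nonneg_left (ih (i + 1)) (hc i)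
      have hC : ∑ i ∈ Ico j n, (γ i - γ (i + 1)) * tailS γ (n + 1) (i + 1)
          ≤ ∑ i ∈ Ico j (n + 1), (γ i - γ (i + 1)) * tailS γ (n + 1) (i + 1) :=
        Finset.sum_le_sum_of_subset_of_nonneg (Finset.Ico_subset_Ico_right (by omega))
          fun i _ _ => mul_nonneg (hc i) (tailS_nonneg hγ0 hγ1 _ _)
      linarith

end aux


open Filter in
/-- If `Σ_m ∏_{k=0}^m (1-γ_k) = +∞` (the chain is not positive recurrent), then
`P(S_n = 0) → 0` as `n → ∞`. -/
theorem hoc_tendsto_zero (γ : ℕ → ℝ) (hdec : Antitone γ) (hγ0 : ∀ k, 0 ≤ γ k)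
    (hγ1 : ∀ k, γ k < 1) (hγlim : Tendsto γ atTop (nhds 0))
    (hdiv : ¬ Summable (fun m => ∏ k ∈ Finset.range (m + 1), (1 - γ k))) :
    Tendsto (fun n => hoc γ n 0) atTop (nhds 0) := by
  set u : ℕ → ℝ := fun n => hoc γ n 0 with hu
  have hun : ∀ n, 0 ≤ u n := fun n => hoc_nonneg hγ0 hγ1 n 0
  have hT1 : ∀ n, tailS γ n 1 = 1 - u n := by
    intro n
    have h0 : (1:ℝ) = ∑ j ∈ range (n + 1), hoc γ n j := (sum_hoc n).symm
    have h1 : range (n + 1) = insert 0 (Icc 1 n) := by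
      ext x; simp [Nat.lt_succ_iff]; omega
    rw [tailS]
    nth_rewrite 1 [h0]
    rw [h1, Finset.sum_insert (by simp)]
    simp [hu]
  have hanti : Antitone u := antitone_nat_of_succ_le fun n => by
    have h := tailS_mono hdec hγ0 hγ1 n 1
    rw [hT1, hT1] at h; linarith
  have hbdd : BddBelow (Set.range u) := ⟨0, by rintro x ⟨n, rfl⟩; exact hun n⟩
  have hconv : Tendsto u atTop (nhds (⨅ n, u n)) := tendsto_atTop_ciInf hanti hbdd
  have hL0 : 0 ≤ ⨅ n, u n := le_ciInf hun
  have hLle : ∀ n, (⨅ n, u n) ≤ u n := fun n => ciInf_le hbdd n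
  have ha : ∀ j, (0:ℝ) ≤ ∏ k ∈ range j, (1 - γ k) := fun j =>
    Finset.prod_nonneg fun k _ => by linarith [hγ1 k]
  have hren : ∀ n, (1:ℝ) = ∑ j ∈ range (n + 1), (∏ k ∈ range j, (1 - γ k)) * u (n - j) := by
    intro n
    nth_rewrite 1 [← sum_hoc n]
    exact Finset.sum_congr rfl fun j hj => hoc_eq hγ0 j n (by simp at hj; omega)
  have hLeq : (⨅ n, u n) = 0 := by
    by_contra hne
    have hLpos : 0 < ⨅ n, u n := lt_of_le_of_ne hL0 (Ne.symm hne)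
    set L := ⨅ n, u n with hL
    have hb0 : ∀ m, (0:ℝ) ≤ ∏ k ∈ range (m + 1), (1 - γ k) := fun m => ha (m + 1)
    have hdivt : Tendsto (fun n => ∑ m ∈ range n, ∏ k ∈ range (m + 1), (1 - γ k))
        atTop atTop := (not_summable_iff_tendsto_nat_atTop_of_nonneg hb0).mp hdiv
    obtain ⟨n, hn⟩ := (hdivt.eventually_ge_atTop (1 / L)).exists
    have key : L * ∑ j ∈ range (n + 1), (∏ k ∈ range j, (1 - γ k)) ≤ 1 := by
      nth_rewrite 2 [hren n]
      rw [Finset.mul_sum]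
      refine Finset.sum_le_sum fun j _ => ?_
      rw [mul_comm L]
      exact mul_le_mul_of_nonneg_left (hLle _) (ha j)
    have hsum : ∑ j ∈ range (n + 1), (∏ k ∈ range j, (1 - γ k))
        = 1 + ∑ m ∈ range n, ∏ k ∈ range (m + 1), (1 - γ k) := by
      rw [Finset.sum_range_succ']; simp [add_comm]
    rw [hsum] at key
    have h2 : L * (1 / L) ≤ L * ∑ m ∈ range n, ∏ k ∈ range (m + 1), (1 - γ k) :=
      mul_le_mul_of_nonneg_left hn (le_of_lt hLpos)
    rw [mul_one_div_cancel (ne_of_gt hLpos)] at h2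
    nlinarith
  rw [hLeq] at hconv
  exact hconv
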